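/- The smoothed truncated quadratic R̂(t) defined by R̂(t) = αt² for t < s₁, R̂(t) = A(t-s₂)³ + B(t-s₂)² + C for s₁ ≤ t ≤ s₂, and R̂(t) = λ for t > s₂, with s₁ = √(λ/α) - ε, s₂ = √(λ/α) + ε, A = -α/(4ε), B = -α(2√(λ/α) + ε)/(4ε), C = λ, and ε = ε₀√(λ/α), is ω-semiconvex with ω = α(2 + ε₀)/(2ε₀); i.e. t ↦ R̂(t) + (ω/2)t² is convex on ℝ. -/

import Mathlib

open Filter Topology

/-- The smoothed truncated quadratic regularizer (cubic-spline smoothing of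
`min {λ, αt²}`) is `ω`-semiconvex with `ω = α(2 + ε₀)/(2ε₀)`. -/
theorem smoothed_truncated_quadratic_semiconvex
    (α lam ε₀ ε s₁ s₂ A B C ω : ℝ)
    (hα : 0 < α) (hlam : 0 < lam) (hε₀ : 0 < ε₀) (hε₀1 : ε₀ < 1)
    (hε : ε = ε₀ * Real.sqrt (lam / α))
    (hs₁ : s₁ = Real.sqrt (lam / α) - ε) (hs₂ : s₂ = Real.sqrt (lam / α) + ε)
    (hA : A = -(α / (4 * ε))) (hB : B = -(α * (2 * Real.sqrt (lam / α) + ε) / (4 * ε)))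
    (hC : C = lam)
    (hω : ω = α * (2 + ε₀) / (2 * ε₀))
    (R : ℝ → ℝ)
    (hR : ∀ t : ℝ, R t =
      if t < s₁ then α * t ^ 2
      else if t ≤ s₂ then A * (t - s₂) ^ 3 + B * (t - s₂) ^ 2 + C
      else lam) :
    ConvexOn ℝ Set.univ (fun t => R t + ω / 2 * t ^ 2) := by
  have hσpos : 0 < Real.sqrt (lam / α) := Real.sqrt_pos.mpr (div_pos hlam hα)
  set σ := Real.sqrt (lam / α) with hσdef
  have hσ2 : σ ^ 2 = lam / α := Real.sq_sqrt (div_pos hlam hα).le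
  have hασ : α * σ ^ 2 = lam := by rw [hσ2]; field_simp
  have hεpos : 0 < ε := by rw [hε]; positivity
  have hs12 : s₁ < s₂ := by rw [hs₁, hs₂]; linarith
  have hωpos : 0 < ω := by rw [hω]; positivity
  have hAneg : A < 0 := by
    rw [hA]; have : 0 < α / (4 * ε) := by positivity
    linarith
  have h2B : 2 * B + ω = 0 := by
    rw [hB, hω, hε]
    field_simp
    ring
  have K0 : α * s₁ ^ 2 = A * (s₁ - s₂) ^ 3 + B * (s₁ - s₂) ^ 2 + C := by
    rw [hA, hB, hC, hs₁, hs₂, hε]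
    field_simp
    nlinarith [hασ, sq_nonneg σ]
  have K1 : (2 * α + ω) * s₁ = 3 * A * (s₁ - s₂) ^ 2 + 2 * B * (s₁ - s₂) + ω * s₁ := by
    rw [hA, hB, hω, hs₁, hs₂, hε]
    field_simp
    ring
  have hmid : ∀ t : ℝ, 3 * A * (t - s₂) ^ 2 + 2 * B * (t - s₂) + ω * t
      = 3 * A * (t - s₂) ^ 2 + ω * s₂ := by
    intro t; linear_combination (t - s₂) * h2B
  set φ : ℝ → ℝ := fun t =>
    if t < s₁ then (2 * α + ω) * t
    else if t ≤ s₂ then 3 * A * (t - s₂) ^ 2 + 2 * B * (t - s₂) + ω * t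
    else ω * t with hφdef
  set g : ℝ → ℝ := fun t => R t + ω / 2 * t ^ 2 with hgdef
  have hd₁ : ∀ x : ℝ, HasDerivAt (fun t => α * t ^ 2 + ω / 2 * t ^ 2) ((2 * α + ω) * x) x := by
    intro x
    have h := ((hasDerivAt_pow 2 x).const_mul α).add ((hasDerivAt_pow 2 x).const_mul (ω / 2))
    refine h.congr_deriv ?_
    ring
  have hd₂ : ∀ x : ℝ, HasDerivAt
      (fun t => A * (t - s₂) ^ 3 + B * (t - s₂) ^ 2 + C + ω / 2 * t ^ 2)
      (3 * A * (x - s₂) ^ 2 + 2 * B * (x - s₂) + ω * x) x := by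
    intro x
    have h := (((((hasDerivAt_id x).sub_const s₂).pow 3).const_mul A).add
        ((((hasDerivAt_id x).sub_const s₂).pow 2).const_mul B)).add_const C |>.add
        ((hasDerivAt_pow 2 x).const_mul (ω / 2))
    refine h.congr_deriv ?_
    simp only [id_eq]
    ring
  have hd₃ : ∀ x : ℝ, HasDerivAt (fun t => lam + ω / 2 * t ^ 2) (ω * x) x := by
    intro x
    have h := ((hasDerivAt_pow 2 x).const_mul (ω / 2)).const_add lam
    refine h.congr_deriv ?_
    ring
  have hg₁ : ∀ t : ℝ, t < s₁ → g t = α * t ^ 2 + ω / 2 * t ^ 2 := by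
    intro t ht; simp only [hgdef, hR t, if_pos ht]
  have hg₂ : ∀ t : ℝ, s₁ ≤ t → t ≤ s₂ →
      g t = A * (t - s₂) ^ 3 + B * (t - s₂) ^ 2 + C + ω / 2 * t ^ 2 := by
    intro t ht1 ht2; simp only [hgdef, hR t, if_neg (not_lt.mpr ht1), if_pos ht2]
  have hg₃ : ∀ t : ℝ, s₂ < t → g t = lam + ω / 2 * t ^ 2 := by
    intro t ht
    simp only [hgdef, hR t, if_neg (not_lt.mpr (le_of_lt (lt_trans hs12 ht))),
      if_neg (not_le.mpr ht)]
  have hg₁' : ∀ t ∈ Set.Iic s₁, g t = α * t ^ 2 + ω / 2 * t ^ 2 := by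
    intro t ht
    rcases lt_or_eq_of_le (Set.mem_Iic.mp ht) with h | h
    · exact hg₁ t h
    · rw [h, hg₂ s₁ le_rfl hs12.le]
      linarith [K0]
  have hg₃' : ∀ t ∈ Set.Ici s₂, g t = lam + ω / 2 * t ^ 2 := by
    intro t ht
    rcases eq_or_lt_of_le (Set.mem_Ici.mp ht) with h | h
    · rw [← h, hg₂ s₂ hs12.le le_rfl, hC]
      ring
    · exact hg₃ t h
  have hderiv : ∀ x : ℝ, HasDerivAt g (φ x) x := by
    intro x
    rcases lt_trichotomy x s₁ with hx | hx | hx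
    · have hev : g =ᶠ[𝓝 x] fun t => α * t ^ 2 + ω / 2 * t ^ 2 :=
        Filter.eventually_of_mem (Iio_mem_nhds hx) (fun t ht => hg₁ t ht)
      have h := (hd₁ x).congr_of_eventuallyEq hev
      have : φ x = (2 * α + ω) * x := by simp only [hφdef, if_pos hx]
      rwa [this]
    · subst hx
      have hleft : HasDerivWithinAt g ((2 * α + ω) * x) (Set.Iic x) x :=
        ((hd₁ x).hasDerivWithinAt).congr hg₁' (hg₁' x Set.self_mem_Iic)
      have hmem : Set.Ico x s₂ ∈ 𝓝[Set.Ici x] x :=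
        Ico_mem_nhdsGE_of_mem ⟨le_rfl, hs12⟩
      have hev : g =ᶠ[𝓝[Set.Ici x] x]
          fun t => A * (t - s₂) ^ 3 + B * (t - s₂) ^ 2 + C + ω / 2 * t ^ 2 :=
        Filter.eventually_of_mem hmem (fun t ht => hg₂ t ht.1 ht.2.le)
      have hright : HasDerivWithinAt g
          (3 * A * (x - s₂) ^ 2 + 2 * B * (x - s₂) + ω * x) (Set.Ici x) x :=
        ((hd₂ x).hasDerivWithinAt).congr_of_eventuallyEq hev (hg₂ x le_rfl hs12.le)
      rw [← K1] at hright
      have h := hleft.union hright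
      rw [Set.Iic_union_Ici] at h
      have hx' : φ x = (2 * α + ω) * x := by
        simp only [hφdef, if_neg (lt_irrefl x), if_pos hs12.le]
        linarith [K1]
      rw [hx']
      exact hasDerivWithinAt_univ.mp h
    · rcases lt_trichotomy x s₂ with hx2 | hx2 | hx2
      · have hmem : Set.Ioo s₁ s₂ ∈ 𝓝 x := Ioo_mem_nhds hx hx2
        have hev : g =ᶠ[𝓝 x]
            fun t => A * (t - s₂) ^ 3 + B * (t - s₂) ^ 2 + C + ω / 2 * t ^ 2 :=
          Filter.eventually_of_mem hmem (fun t ht => hg₂ t ht.1.le ht.2.le)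
        have h := (hd₂ x).congr_of_eventuallyEq hev
        have : φ x = 3 * A * (x - s₂) ^ 2 + 2 * B * (x - s₂) + ω * x := by
          simp only [hφdef, if_neg (not_lt.mpr hx.le), if_pos hx2.le]
        rwa [this]
      · have hmem : Set.Ioc s₁ x ∈ 𝓝[Set.Iic x] x :=
          Ioc_mem_nhdsLE_of_mem ⟨hx, le_rfl⟩
        have hev : g =ᶠ[𝓝[Set.Iic x] x]
            fun t => A * (t - s₂) ^ 3 + B * (t - s₂) ^ 2 + C + ω / 2 * t ^ 2 :=
          Filter.eventually_of_mem hmem (fun t ht => hg₂ t ht.1.le (ht.2.trans hx2.le))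
        have hleft : HasDerivWithinAt g
            (3 * A * (x - s₂) ^ 2 + 2 * B * (x - s₂) + ω * x) (Set.Iic x) x :=
          ((hd₂ x).hasDerivWithinAt).congr_of_eventuallyEq hev
            (hg₂ x hx.le hx2.le)
        have hval : 3 * A * (x - s₂) ^ 2 + 2 * B * (x - s₂) + ω * x = ω * x := by
          rw [hx2]; ring
        rw [hval] at hleft
        have hright : HasDerivWithinAt g (ω * x) (Set.Ici x) x := by
          refine ((hd₃ x).hasDerivWithinAt).congr ?_ ?_
          · intro t ht
            exact hg₃' t (hx2 ▸ ht)
          · exact hg₃' x (by rw [hx2]; exact Set.self_mem_Ici)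
        have h := hleft.union hright
        rw [Set.Iic_union_Ici] at h
        have hx' : φ x = ω * x := by
          simp only [hφdef, if_neg (not_lt.mpr hx.le), if_pos hx2.le]
          rw [hx2]; ring
        rw [hx']
        exact hasDerivWithinAt_univ.mp h
      · have hev : g =ᶠ[𝓝 x] fun t => lam + ω / 2 * t ^ 2 :=
          Filter.eventually_of_mem (Ioi_mem_nhds hx2) (fun t ht => hg₃ t ht)
        have h := (hd₃ x).congr_of_eventuallyEq hev
        have : φ x = ω * x := by
          simp only [hφdef, if_neg (not_lt.mpr hx.le), if_neg (not_le.mpr hx2)]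
        rwa [this]
  -- monotonicity of φ
  have h2αω : 0 < 2 * α + ω := by linarith
  have lb : ∀ t : ℝ, s₁ ≤ t → t ≤ s₂ →
      (2 * α + ω) * s₁ ≤ 3 * A * (t - s₂) ^ 2 + 2 * B * (t - s₂) + ω * t := by
    intro t h1 h2
    rw [hmid t]
    have h3 : 3 * A * (s₁ - s₂) ^ 2 ≤ 3 * A * (t - s₂) ^ 2 := by
      have key : 3 * A * (t - s₂) ^ 2 - 3 * A * (s₁ - s₂) ^ 2
          = (-(3 * A)) * ((t - s₁) * (2 * s₂ - t - s₁)) := by ring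
      have pos : (0:ℝ) ≤ (-(3 * A)) * ((t - s₁) * (2 * s₂ - t - s₁)) :=
        mul_nonneg (by linarith) (mul_nonneg (by linarith) (by linarith))
      linarith [key ▸ pos]
    have h4 : (2 * α + ω) * s₁ = 3 * A * (s₁ - s₂) ^ 2 + ω * s₂ := by
      rw [K1, hmid s₁]
    linarith
  have ub : ∀ t : ℝ, s₁ ≤ t → t ≤ s₂ →
      3 * A * (t - s₂) ^ 2 + 2 * B * (t - s₂) + ω * t ≤ ω * s₂ := by
    intro t h1 h2
    rw [hmid t]
    have pos : (0:ℝ) ≤ (-(3 * A)) * (t - s₂) ^ 2 :=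
      mul_nonneg (by linarith) (sq_nonneg _)
    linarith
  have midmono : ∀ u v : ℝ, s₁ ≤ u → u ≤ v → v ≤ s₂ →
      3 * A * (u - s₂) ^ 2 + 2 * B * (u - s₂) + ω * u
        ≤ 3 * A * (v - s₂) ^ 2 + 2 * B * (v - s₂) + ω * v := by
    intro u v h1 h2 h3
    rw [hmid u, hmid v]
    have key : 3 * A * (v - s₂) ^ 2 - 3 * A * (u - s₂) ^ 2
        = (-(3 * A)) * ((v - u) * (2 * s₂ - u - v)) := by ring
    have pos : (0:ℝ) ≤ (-(3 * A)) * ((v - u) * (2 * s₂ - u - v)) :=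
      mul_nonneg (by linarith) (mul_nonneg (by linarith) (by linarith))
    linarith [key ▸ pos]
  have hmono : Monotone φ := by
    intro a b hab
    simp only [hφdef]
    split_ifs with ha1 hb1 hb2 ha2 hb1' hb2' hb1'' hb2''
    · exact mul_le_mul_of_nonneg_left hab h2αω.le
    · calc (2 * α + ω) * a ≤ (2 * α + ω) * s₁ :=
            mul_le_mul_of_nonneg_left (le_of_lt ha1) h2αω.le
        _ ≤ _ := lb b (not_lt.mp hb1) hb2
    · have h1 : (2 * α + ω) * a ≤ (2 * α + ω) * s₁ :=
        mul_le_mul_of_nonneg_left (le_of_lt ha1) h2αω.le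
      have h2 := lb s₁ le_rfl hs12.le
      have h3 := ub s₁ le_rfl hs12.le
      have h4 : ω * s₂ ≤ ω * b := mul_le_mul_of_nonneg_left (not_le.mp hb2).le hωpos.le
      linarith
    · linarith [not_lt.mp ha1]
    · exact midmono a b (not_lt.mp ha1) hab hb2'
    · have h1 := ub a (not_lt.mp ha1) ha2
      have h2 : ω * s₂ ≤ ω * b := mul_le_mul_of_nonneg_left (not_le.mp hb2').le hωpos.le
      linarith
    · linarith [not_lt.mp ha1, not_le.mp ha2]
    · linarith [not_le.mp ha2]
    · exact mul_le_mul_of_nonneg_left hab hωpos.le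
  have hdiff : Differentiable ℝ g := fun x => (hderiv x).differentiableAt
  have hdg : deriv g = φ := funext fun x => (hderiv x).deriv
  exact Monotone.convexOn_univ_of_deriv hdiff (hdg ▸ hmono)
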